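/- If κ < λ' ≤ λ and Γ is a (κ, λ) saS graph, then Γ has an induced subgraph Γ' which is a (κ, λ') saS graph. -/

import Mathlib

structure BipGraph (V : Type*) where
  L : Set V
  R : Set V
  Lne : L.Nonempty
  Rne : R.Nonempty
  disj : Disjoint L R
  E : V → V → Prop
  symm : ∀ x y, E x y → E y x
  bip : ∀ x y, E x y → (x ∈ L ∧ y ∈ R) ∨ (x ∈ R ∧ y ∈ L)

namespace BipGraph

variable {V W : Type*}

def verts (Γ : BipGraph V) : Set V := Γ.L ∪ Γ.R

def nbr (Γ : BipGraph V) (v : V) : Set V := {u | Γ.E v u}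

def IsComplete (Γ : BipGraph V) : Prop := ∀ x ∈ Γ.L, ∀ y ∈ Γ.R, Γ.E x y

def IsEmptyG (Γ : BipGraph V) : Prop := ∀ x y, ¬ Γ.E x y

def IsPartialIso (Γ : BipGraph V) (Γ' : BipGraph W) (s : Set V) (f : V → W) : Prop :=
  s ⊆ Γ.verts ∧ Set.InjOn f s ∧
  (∀ x ∈ s, x ∈ Γ.L → f x ∈ Γ'.L) ∧
  (∀ x ∈ s, x ∈ Γ.R → f x ∈ Γ'.R) ∧
  (∀ x ∈ s, ∀ y ∈ s, (Γ.E x y ↔ Γ'.E (f x) (f y)))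

def IsIso (Γ : BipGraph V) (Γ' : BipGraph W) (f : V → W) : Prop :=
  Set.BijOn f Γ.verts Γ'.verts ∧
  Set.MapsTo f Γ.L Γ'.L ∧ Set.MapsTo f Γ.R Γ'.R ∧
  (∀ x ∈ Γ.verts, ∀ y ∈ Γ.verts, (Γ.E x y ↔ Γ'.E (f x) (f y)))

def IsAuto (Γ : BipGraph V) (f : V → V) : Prop := Γ.IsIso Γ f

def Homog (Γ : BipGraph V) : Prop :=
  ∀ (s : Set V) (f : V → V), s.Finite → Γ.IsPartialIso Γ s f →
    ∃ g : V → V, Γ.IsAuto g ∧ Set.EqOn f g s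

def IsRandom (Γ : BipGraph V) : Prop :=
  Γ.L.Infinite ∧ Γ.R.Infinite ∧
  (∀ X Y : Set V, X ⊆ Γ.L → Y ⊆ Γ.L → X.Finite → Y.Finite → Disjoint X Y →
    {u ∈ Γ.R | (∀ x ∈ X, Γ.E x u) ∧ (∀ y ∈ Y, ¬ Γ.E y u)}.Infinite) ∧
  (∀ X Y : Set V, X ⊆ Γ.R → Y ⊆ Γ.R → X.Finite → Y.Finite → Disjoint X Y →
    {u ∈ Γ.L | (∀ x ∈ X, Γ.E x u) ∧ (∀ y ∈ Y, ¬ Γ.E y u)}.Infinite)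

def Ctble (Γ : BipGraph V) : Prop := Γ.L.Countable ∧ Γ.R.Countable

def IsSaS (Γ : BipGraph V) (κ μ : Cardinal) : Prop :=
  Γ.Homog ∧ ¬ Γ.IsComplete ∧ ¬ Γ.IsEmptyG ∧
  Cardinal.mk Γ.L = κ ∧ Cardinal.mk Γ.R = μ ∧ κ < μ

end BipGraph

section Aux

open Set

variable {V : Type*} {Γ : BipGraph V} {g : V → V} {x y r r' : V}

lemma not_E_RR (hx : x ∈ Γ.R) (hy : y ∈ Γ.R) : ¬ Γ.E x y := by
  intro h
  rcases Γ.bip x y h with ⟨h1, _⟩ | ⟨_, h2⟩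
  · exact Set.disjoint_left.mp Γ.disj h1 hx
  · exact Set.disjoint_left.mp Γ.disj h2 hy

lemma not_E_LL (hx : x ∈ Γ.L) (hy : y ∈ Γ.L) : ¬ Γ.E x y := by
  intro h
  rcases Γ.bip x y h with ⟨_, h2⟩ | ⟨h1, _⟩
  · exact Set.disjoint_left.mp Γ.disj hy h2
  · exact Set.disjoint_left.mp Γ.disj hx h1

lemma L_sub_verts : Γ.L ⊆ Γ.verts := Set.subset_union_left
lemma R_sub_verts : Γ.R ⊆ Γ.verts := Set.subset_union_right

lemma id_auto : Γ.IsAuto id := by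
  refine ⟨⟨fun x hx => hx, fun x _ y _ h => h, fun x hx => ⟨x, hx, rfl⟩⟩,
    fun x hx => hx, fun x hx => hx, fun x _ y _ => Iff.rfl⟩

lemma auto_mapsL (hg : Γ.IsAuto g) (hx : x ∈ Γ.L) : g x ∈ Γ.L := hg.2.1 hx
lemma auto_mapsR (hg : Γ.IsAuto g) (hx : x ∈ Γ.R) : g x ∈ Γ.R := hg.2.2.1 hx
lemma auto_injOn (hg : Γ.IsAuto g) : Set.InjOn g Γ.verts := hg.1.2.1
lemma auto_iff (hg : Γ.IsAuto g) (hx : x ∈ Γ.verts) (hy : y ∈ Γ.verts) :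
    Γ.E x y ↔ Γ.E (g x) (g y) := hg.2.2.2 x hx y hy

lemma auto_L_surj (hg : Γ.IsAuto g) : Γ.L ⊆ g '' Γ.L := by
  intro y hy
  obtain ⟨x, hx, hgx⟩ := hg.1.2.2 (L_sub_verts hy)
  rcases hx with hxL | hxR
  · exact ⟨x, hxL, hgx⟩
  · exact absurd (hgx ▸ auto_mapsR hg hxR) fun h => Set.disjoint_left.mp Γ.disj hy h

lemma auto_R_surj (hg : Γ.IsAuto g) : Γ.R ⊆ g '' Γ.R := by
  intro y hy
  obtain ⟨x, hx, hgx⟩ := hg.1.2.2 (R_sub_verts hy)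
  rcases hx with hxL | hxR
  · exact absurd (hgx ▸ auto_mapsL hg hxL) fun h => Set.disjoint_left.mp Γ.disj h hy
  · exact ⟨x, hxR, hgx⟩

lemma nbr_sub_L (hr : r ∈ Γ.R) : Γ.nbr r ⊆ Γ.L := by
  intro u hu
  rcases Γ.bip r u hu with ⟨h1, _⟩ | ⟨_, h2⟩
  · exact absurd h1 fun h => Set.disjoint_left.mp Γ.disj h hr
  · exact h2

lemma nbr_auto (hg : Γ.IsAuto g) (hr : r ∈ Γ.R) : Γ.nbr (g r) = g '' Γ.nbr r := by
  ext u
  constructor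
  · intro hu
    have huL : u ∈ Γ.L := nbr_sub_L (auto_mapsR hg hr) hu
    obtain ⟨x, hxL, hgx⟩ := auto_L_surj hg huL
    refine ⟨x, ?_, hgx⟩
    have := (auto_iff hg (R_sub_verts hr) (L_sub_verts hxL)).mpr (by rw [hgx]; exact hu)
    exact this
  · rintro ⟨x, hx, rfl⟩
    have hxL : x ∈ Γ.L := nbr_sub_L hr hx
    exact (auto_iff hg (R_sub_verts hr) (L_sub_verts hxL)).mp hx

end Aux
section Aux2

open Set
open scoped Classical

variable {V : Type*} {Γ : BipGraph V} {r r' : V}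

lemma exists_auto_one (hH : Γ.Homog) (hr : r ∈ Γ.R) (hr' : r' ∈ Γ.R) :
    ∃ g, Γ.IsAuto g ∧ g r = r' := by
  have hpi : Γ.IsPartialIso Γ {r} (fun _ => r') := by
    refine ⟨by simpa using R_sub_verts hr, Set.injOn_singleton _ _, ?_, ?_, ?_⟩
    · intro x hx hxL
      rw [Set.mem_singleton_iff] at hx; subst hx
      exact absurd hxL fun h => Set.disjoint_left.mp Γ.disj h hr
    · intro x _ _; exact hr'
    · intro x hx y hy
      rw [Set.mem_singleton_iff] at hx hy; subst hx; subst hy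
      exact iff_of_false (not_E_RR hr hr) (not_E_RR hr' hr')
  obtain ⟨g, hg, heq⟩ := hH _ _ (Set.finite_singleton r) hpi
  exact ⟨g, hg, (heq rfl).symm⟩

lemma exists_auto_two (hH : Γ.Homog) {r1 r2 r1' r2' : V} (h1 : r1 ∈ Γ.R) (h2 : r2 ∈ Γ.R)
    (h1' : r1' ∈ Γ.R) (h2' : r2' ∈ Γ.R) (h12 : r1 ≠ r2) (h12' : r1' ≠ r2') :
    ∃ g, Γ.IsAuto g ∧ g r1 = r1' ∧ g r2 = r2' := by
  set f : V → V := fun x => if x = r1 then r1' else r2' with hf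
  have hfr1 : f r1 = r1' := by simp [hf]
  have hfr2 : f r2 = r2' := by simp [hf, h12.symm]
  have hfR : ∀ x, f x ∈ Γ.R := by
    intro x; by_cases h : x = r1 <;> simp [hf, h, h1', h2']
  have hpi : Γ.IsPartialIso Γ {r1, r2} f := by
    refine ⟨?_, ?_, ?_, ?_, ?_⟩
    · intro x hx; rcases hx with rfl | rfl
      exacts [R_sub_verts h1, R_sub_verts h2]
    · intro x hx y hy hxy
      rcases hx with rfl | rfl <;> rcases hy with rfl | rfl <;> try rfl
      · rw [hfr1, hfr2] at hxy; exact absurd hxy h12'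
      · rw [hfr1, hfr2] at hxy; exact absurd hxy.symm h12'
    · intro x hx hxL
      have hxR : x ∈ Γ.R := by rcases hx with rfl | rfl; exacts [h1, h2]
      exact absurd hxL fun h => Set.disjoint_left.mp Γ.disj h hxR
    · intro x _ _; exact hfR x
    · intro x hx y hy
      have hxR : x ∈ Γ.R := by rcases hx with rfl | rfl; exacts [h1, h2]
      have hyR : y ∈ Γ.R := by rcases hy with rfl | rfl; exacts [h1, h2]
      exact iff_of_false (not_E_RR hxR hyR) (not_E_RR (hfR x) (hfR y))
  obtain ⟨g, hg, heq⟩ := hH _ _ (by simp) hpi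
  refine ⟨g, hg, ?_, ?_⟩
  · rw [← heq (by simp), hfr1]
  · rw [← heq (by simp), hfr2]

lemma exists_auto_L (hH : Γ.Homog) {s : Set V} {f : V → V} (hsL : s ⊆ Γ.L)
    (hsfin : s.Finite) (hinj : Set.InjOn f s) (himg : f '' s ⊆ Γ.L) :
    ∃ g, Γ.IsAuto g ∧ Set.EqOn f g s := by
  have hpi : Γ.IsPartialIso Γ s f := by
    refine ⟨fun x hx => L_sub_verts (hsL hx), hinj, ?_, ?_, ?_⟩
    · intro x hx _; exact himg ⟨x, hx, rfl⟩
    · intro x hx hxR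
      exact absurd (hsL hx) fun h => Set.disjoint_left.mp Γ.disj h hxR
    · intro x hx y hy
      exact iff_of_false (not_E_LL (hsL hx) (hsL hy))
        (not_E_LL (himg ⟨x, hx, rfl⟩) (himg ⟨y, hy, rfl⟩))
  obtain ⟨g, hg, heq⟩ := hH _ _ hsfin hpi
  exact ⟨g, hg, heq⟩

lemma exists_nbr (hH : Γ.Homog) (hNE : ¬ Γ.IsEmptyG) (hr : r ∈ Γ.R) :
    ∃ ℓ ∈ Γ.L, Γ.E ℓ r := by
  rw [BipGraph.IsEmptyG] at hNE; push_neg at hNE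
  obtain ⟨x, y, hxy⟩ := hNE
  obtain ⟨ℓ0, r0, hℓ0, hr0, h00⟩ : ∃ ℓ0 r0, ℓ0 ∈ Γ.L ∧ r0 ∈ Γ.R ∧ Γ.E ℓ0 r0 := by
    rcases Γ.bip x y hxy with ⟨hx, hy⟩ | ⟨hx, hy⟩
    · exact ⟨x, y, hx, hy, hxy⟩
    · exact ⟨y, x, hy, hx, Γ.symm _ _ hxy⟩
  obtain ⟨g, hg, hgr⟩ := exists_auto_one hH hr0 hr
  refine ⟨g ℓ0, auto_mapsL hg hℓ0, ?_⟩
  rw [← hgr]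
  exact (auto_iff hg (L_sub_verts hℓ0) (R_sub_verts hr0)).mp h00

lemma exists_nonnbr (hH : Γ.Homog) (hNC : ¬ Γ.IsComplete) (hr : r ∈ Γ.R) :
    ∃ ℓ ∈ Γ.L, ¬ Γ.E ℓ r := by
  rw [BipGraph.IsComplete] at hNC; push_neg at hNC
  obtain ⟨ℓ1, hℓ1, r1, hr1, h11⟩ := hNC
  obtain ⟨g, hg, hgr⟩ := exists_auto_one hH hr1 hr
  refine ⟨g ℓ1, auto_mapsL hg hℓ1, ?_⟩
  rw [← hgr]
  exact fun h => h11 ((auto_iff hg (L_sub_verts hℓ1) (R_sub_verts hr1)).mpr h)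

lemma nbr_inj (hH : Γ.Homog) (hNE : ¬ Γ.IsEmptyG) (hNC : ¬ Γ.IsComplete)
    (hr : r ∈ Γ.R) (hr' : r' ∈ Γ.R) (heq : Γ.nbr r = Γ.nbr r') : r = r' := by
  by_contra hne
  have hall : ∀ r'' ∈ Γ.R, Γ.nbr r'' = Γ.nbr r := by
    intro r'' hr''
    by_cases h : r'' = r
    · rw [h]
    · obtain ⟨g, hg, hg1, hg2⟩ := exists_auto_two hH hr hr' hr hr'' hne (Ne.symm h)
      calc Γ.nbr r'' = Γ.nbr (g r') := by rw [hg2]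
        _ = g '' Γ.nbr r' := nbr_auto hg hr'
        _ = g '' Γ.nbr r := by rw [heq]
        _ = Γ.nbr (g r) := (nbr_auto hg hr).symm
        _ = Γ.nbr r := by rw [hg1]
  obtain ⟨ℓa, hℓa, hEa⟩ := exists_nbr hH hNE hr
  obtain ⟨ℓb, hℓb, hEb⟩ := exists_nonnbr hH hNC hr
  obtain ⟨g, hg, hgeq⟩ := exists_auto_L hH (by simpa using hℓa) (Set.finite_singleton ℓa)
    (Set.injOn_singleton _ _) (f := fun _ => ℓb) (by simpa using hℓb)
  have hgℓa : g ℓa = ℓb := (hgeq rfl).symm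
  have hE' : Γ.E ℓb (g r) := by
    rw [← hgℓa]
    exact (auto_iff hg (L_sub_verts hℓa) (R_sub_verts hr)).mp hEa
  have : ℓb ∈ Γ.nbr (g r) := Γ.symm _ _ hE'
  rw [hall _ (auto_mapsR hg hr)] at this
  exact hEb (Γ.symm _ _ this)

end Aux2
section Aux3

open Set
open scoped Classical

variable {V : Type*} {Γ : BipGraph V}

lemma finite_L_absurd (hH : Γ.Homog) (hNE : ¬ Γ.IsEmptyG) (hNC : ¬ Γ.IsComplete)
    (hfin : Γ.L.Finite) (hcard : Cardinal.mk Γ.L < Cardinal.mk Γ.R) : False := by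
  obtain ⟨r0, hr0⟩ := Γ.Rne
  set A := Γ.nbr r0 with hA
  have hAL : A ⊆ Γ.L := nbr_sub_L hr0
  have hAfin : A.Finite := hfin.subset hAL
  -- every neighbourhood is an injective image of A
  have himg : ∀ r ∈ Γ.R, ∃ g, Γ.IsAuto g ∧ Γ.nbr r = g '' A ∧ Set.InjOn g Γ.verts := by
    intro r hr
    obtain ⟨g, hg, hgr⟩ := exists_auto_one hH hr0 hr
    exact ⟨g, hg, by rw [← hgr, nbr_auto hg hr0], auto_injOn hg⟩
  have hncard : ∀ r ∈ Γ.R, (Γ.nbr r).ncard = A.ncard := by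
    intro r hr
    obtain ⟨g, hg, hgr, hinj⟩ := himg r hr
    rw [hgr]
    exact Set.ncard_image_of_injOn (hinj.mono (fun x hx => L_sub_verts (hAL hx)))
  have hcompl : ∀ r ∈ Γ.R, (Γ.L \ Γ.nbr r).ncard = (Γ.L \ A).ncard := by
    intro r hr
    obtain ⟨g, hg, hgr, hinj⟩ := himg r hr
    have hset : Γ.L \ Γ.nbr r = g '' (Γ.L \ A) := by
      ext y
      constructor
      · rintro ⟨hyL, hynbr⟩
        obtain ⟨x, hxL, rfl⟩ := auto_L_surj hg hyL
        refine ⟨x, ⟨hxL, fun hxA => hynbr ?_⟩, rfl⟩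
        rw [hgr]; exact ⟨x, hxA, rfl⟩
      · rintro ⟨x, ⟨hxL, hxA⟩, rfl⟩
        refine ⟨auto_mapsL hg hxL, fun hmem => hxA ?_⟩
        rw [hgr] at hmem
        obtain ⟨x', hx'A, hx'e⟩ := hmem
        rwa [← hinj (L_sub_verts (hAL hx'A)) (L_sub_verts hxL) hx'e]
    rw [hset]
    exact Set.ncard_image_of_injOn (hinj.mono (fun x hx => L_sub_verts hx.1))
  have hRleL : (∀ r ∈ Γ.R, ∃ a, Γ.nbr r = {a}) → False := by
    intro h
    have hj : ∀ r : Γ.R, ∃ a : Γ.L, Γ.nbr (r : V) = {(a : V)} := by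
      rintro ⟨r, hr⟩
      obtain ⟨a, ha⟩ := h r hr
      have : a ∈ Γ.L := nbr_sub_L hr (by rw [ha]; rfl)
      exact ⟨⟨a, this⟩, ha⟩
    choose j hjspec using hj
    have hjinj : Function.Injective j := by
      intro r r' hrr'
      have : Γ.nbr (r : V) = Γ.nbr (r' : V) := by rw [hjspec r, hjspec r', hrr']
      exact Subtype.ext (nbr_inj hH hNE hNC r.2 r'.2 this)
    exact absurd (Cardinal.mk_le_of_injective hjinj) (not_le.mpr hcard)
  -- case 1 : all neighbourhoods are singletons
  have hA1 : A.ncard ≠ 1 := by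
    intro h1
    refine hRleL (fun r hr => ?_)
    rw [← Set.ncard_eq_one, hncard r hr, h1]
  -- case 2 : all co-neighbourhoods are singletons
  have hA2 : (Γ.L \ A).ncard ≠ 1 := by
    intro h1
    have h : ∀ r ∈ Γ.R, ∃ b, Γ.L \ Γ.nbr r = {b} := by
      intro r hr
      rw [← Set.ncard_eq_one, hcompl r hr, h1]
    have hj : ∀ r : Γ.R, ∃ b : Γ.L, Γ.L \ Γ.nbr (r : V) = {(b : V)} := by
      rintro ⟨r, hr⟩
      obtain ⟨b, hb⟩ := h r hr
      have : b ∈ Γ.L := by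
        have : b ∈ Γ.L \ Γ.nbr r := by rw [hb]; rfl
        exact this.1
      exact ⟨⟨b, this⟩, hb⟩
    choose j hjspec using hj
    have hjinj : Function.Injective j := by
      intro r r' hrr'
      have hdd : Γ.L \ Γ.nbr (r : V) = Γ.L \ Γ.nbr (r' : V) := by
        rw [hjspec r, hjspec r', hrr']
      have : Γ.nbr (r : V) = Γ.nbr (r' : V) := by
        have e1 : Γ.L \ (Γ.L \ Γ.nbr (r : V)) = Γ.nbr (r : V) :=
          Set.diff_diff_cancel_left (nbr_sub_L r.2)
        have e2 : Γ.L \ (Γ.L \ Γ.nbr (r' : V)) = Γ.nbr (r' : V) :=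
          Set.diff_diff_cancel_left (nbr_sub_L r'.2)
        rw [← e1, ← e2, hdd]
      exact Subtype.ext (nbr_inj hH hNE hNC r.2 r'.2 this)
    exact absurd (Cardinal.mk_le_of_injective hjinj) (not_le.mpr hcard)
  -- main case : both sides have at least two elements
  have hAne : A.Nonempty := by
    obtain ⟨ℓ, hℓ, hE⟩ := exists_nbr hH hNE hr0
    exact ⟨ℓ, Γ.symm _ _ hE⟩
  have hcone : (Γ.L \ A).Nonempty := by
    obtain ⟨ℓ, hℓ, hE⟩ := exists_nonnbr hH hNC hr0
    exact ⟨ℓ, hℓ, fun h => hE (Γ.symm _ _ h)⟩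
  have hA2le : 2 ≤ A.ncard := by
    have := Set.ncard_pos hAfin |>.mpr hAne
    omega
  have hco2le : 2 ≤ (Γ.L \ A).ncard := by
    have := Set.ncard_pos (hfin.subset Set.diff_subset) |>.mpr hcone
    omega
  obtain ⟨x1, hx1, x2, hx2, hx12⟩ := (Set.one_lt_ncard hAfin).mp (by omega)
  obtain ⟨y1, hy1, y2, hy2, hy12⟩ :=
    (Set.one_lt_ncard (s := Γ.L \ A) (hfin.subset Set.diff_subset)).mp (by omega)
  have hy1A : y1 ∉ A := hy1.2
  have hy2A : y2 ∉ A := hy2.2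
  -- build r_B with neighbourhood A with x1 replaced by y1
  set fB : V → V := fun x => if x = x1 then y1 else x with hfB
  have hfBinj : Set.InjOn fB A := by
    intro a ha b hb hab
    by_cases h1 : a = x1 <;> by_cases h2 : b = x1
    · rw [h1, h2]
    · rw [hfB] at hab; simp only [if_pos h1, if_neg h2] at hab
      exact absurd (hab ▸ hb) hy1A
    · rw [hfB] at hab; simp only [if_neg h1, if_pos h2] at hab
      exact absurd (hab ▸ ha) hy1A
    · rw [hfB] at hab; simpa only [if_neg h1, if_neg h2] using hab
  have hfBimg : fB '' A ⊆ Γ.L := by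
    rintro - ⟨a, ha, rfl⟩
    by_cases h : a = x1
    · rw [hfB]; simp only [if_pos h]; exact hy1.1
    · rw [hfB]; simp only [if_neg h]; exact hAL ha
  obtain ⟨gB, hgB, hgBeq⟩ := exists_auto_L hH hAL hAfin hfBinj hfBimg
  set B : Set V := fB '' A with hBdef
  set rB : V := gB r0 with hrB
  have hrBR : rB ∈ Γ.R := auto_mapsR hgB hr0
  have hnbrB : Γ.nbr rB = B := by
    rw [hrB, nbr_auto hgB hr0, ← hA, hBdef, Set.image_congr hgBeq]
  have hBL : B ⊆ Γ.L := hfBimg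
  have hx1B : x1 ∉ B := by
    rintro ⟨a, ha, hfa⟩
    by_cases h : a = x1
    · rw [hfB] at hfa; simp only [if_pos h] at hfa
      exact hy1A (hfa ▸ hx1)
    · rw [hfB] at hfa; simp only [if_neg h] at hfa
      exact h (hfa)
  have hAB : A ∩ B = A \ {x1} := by
    ext a
    constructor
    · rintro ⟨ha, hb⟩
      exact ⟨ha, fun h => hx1B ((Set.mem_singleton_iff.mp h) ▸ hb)⟩
    · rintro ⟨ha, hax1⟩
      refine ⟨ha, ⟨a, ha, ?_⟩⟩
      rw [hfB]; simp only [if_neg (fun h => hax1 (Set.mem_singleton_iff.mpr h))]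
  -- build r_D with neighbourhood A with x1, x2 replaced by y1, y2
  set fD : V → V := fun x => if x = x1 then y1 else if x = x2 then y2 else x with hfD
  have hfDval : ∀ a, a ∈ A → a ≠ x1 → a ≠ x2 → fD a = a := by
    intro a _ h1 h2; rw [hfD]; simp only [if_neg h1, if_neg h2]
  have hfDinj : Set.InjOn fD A := by
    intro a ha b hb hab
    rw [hfD] at hab
    by_cases h1 : a = x1
    · by_cases h2 : b = x1
      · rw [h1, h2]
      · by_cases h4 : b = x2
        · simp only [if_pos h1, if_neg h2, if_pos h4] at hab
          exact absurd hab hy12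
        · simp only [if_pos h1, if_neg h2, if_neg h4] at hab
          exact absurd (hab ▸ hb) hy1A
    · by_cases h3 : a = x2
      · by_cases h2 : b = x1
        · simp only [if_neg h1, if_pos h3, if_pos h2] at hab
          exact absurd hab.symm hy12
        · by_cases h4 : b = x2
          · rw [h3, h4]
          · simp only [if_neg h1, if_pos h3, if_neg h2, if_neg h4] at hab
            exact absurd (hab ▸ hb) hy2A
      · by_cases h2 : b = x1
        · simp only [if_neg h1, if_neg h3, if_pos h2] at hab
          exact absurd (hab ▸ ha) hy1A
        · by_cases h4 : b = x2
          · simp only [if_neg h1, if_neg h3, if_neg h2, if_pos h4] at hab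
            exact absurd (hab ▸ ha) hy2A
          · simpa only [if_neg h1, if_neg h3, if_neg h2, if_neg h4] using hab
  have hfDimg : fD '' A ⊆ Γ.L := by
    rintro - ⟨a, ha, rfl⟩
    rw [hfD]
    by_cases h1 : a = x1
    · simp only [if_pos h1]; exact hy1.1
    · by_cases h2 : a = x2
      · simp only [if_neg h1, if_pos h2]; exact hy2.1
      · simp only [if_neg h1, if_neg h2]; exact hAL ha
  obtain ⟨gD, hgD, hgDeq⟩ := exists_auto_L hH hAL hAfin hfDinj hfDimg
  set D : Set V := fD '' A with hDdef
  set rD : V := gD r0 with hrD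
  have hrDR : rD ∈ Γ.R := auto_mapsR hgD hr0
  have hnbrD : Γ.nbr rD = D := by
    rw [hrD, nbr_auto hgD hr0, ← hA, hDdef, Set.image_congr hgDeq]
  have hx1D : x1 ∉ D := by
    rintro ⟨a, ha, hfa⟩
    rw [hfD] at hfa
    by_cases h1 : a = x1
    · simp only [if_pos h1] at hfa; exact hy1A (hfa ▸ hx1)
    · by_cases h2 : a = x2
      · simp only [if_neg h1, if_pos h2] at hfa; exact hy2A (hfa ▸ hx1)
      · simp only [if_neg h1, if_neg h2] at hfa; exact h1 hfa
  have hx2D : x2 ∉ D := by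
    rintro ⟨a, ha, hfa⟩
    rw [hfD] at hfa
    by_cases h1 : a = x1
    · simp only [if_pos h1] at hfa; exact hy1A (hfa ▸ hx2)
    · by_cases h2 : a = x2
      · simp only [if_neg h1, if_pos h2] at hfa; exact hy2A (hfa ▸ hx2)
      · simp only [if_neg h1, if_neg h2] at hfa; exact h2 hfa
  have hAD : A ∩ D = (A \ {x1}) \ {x2} := by
    ext a
    constructor
    · rintro ⟨ha, hd⟩
      exact ⟨⟨ha, fun h => hx1D ((Set.mem_singleton_iff.mp h) ▸ hd)⟩,
        fun h => hx2D ((Set.mem_singleton_iff.mp h) ▸ hd)⟩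
    · rintro ⟨⟨ha, h1⟩, h2⟩
      refine ⟨ha, ⟨a, ha, hfDval a ha ?_ ?_⟩⟩
      · exact fun h => h1 (Set.mem_singleton_iff.mpr h)
      · exact fun h => h2 (Set.mem_singleton_iff.mpr h)
  -- rB and rD differ from r0
  have hrBne : r0 ≠ rB := by
    intro h
    have : A = B := by rw [hA, h, hnbrB]
    exact hx1B (this ▸ hx1)
  have hrDne : r0 ≠ rD := by
    intro h
    have : A = D := by rw [hA, h, hnbrD]
    exact hx1D (this ▸ hx1)
  obtain ⟨g, hg, hg1, hg2⟩ := exists_auto_two hH hr0 hrBR hr0 hrDR hrBne hrDne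
  have hAA : g '' A = A := by
    rw [hA, ← nbr_auto hg hr0, hg1]
  have hBD : g '' B = D := by
    rw [← hnbrB, ← nbr_auto hg hrBR, hg2, hnbrD]
  have hsub : A ∪ B ⊆ Γ.verts := by
    intro a ha
    rcases ha with h | h
    exacts [L_sub_verts (hAL h), L_sub_verts (hBL h)]
  have hint : A ∩ D = g '' (A ∩ B) := by
    rw [((auto_injOn hg).mono hsub).image_inter Set.subset_union_left Set.subset_union_right, hAA, hBD]
  have hcardeq : (A ∩ D).ncard = (A ∩ B).ncard := by
    rw [hint]
    exact Set.ncard_image_of_injOn ((auto_injOn hg).mono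
      (fun a ha => hsub (Or.inl ha.1)))
  have hc1 : (A \ {x1}).ncard = A.ncard - 1 :=
    Set.ncard_diff_singleton_of_mem hx1
  have hx2' : x2 ∈ A \ {x1} := ⟨hx2, fun h => hx12 (Set.mem_singleton_iff.mp h).symm⟩
  have hc2 : ((A \ {x1}) \ {x2}).ncard = A.ncard - 1 - 1 := by
    rw [Set.ncard_diff_singleton_of_mem hx2', hc1]
  rw [hAD, hAB, hc1, hc2] at hcardeq
  omega

end Aux3
section Main

open Set
open scoped Classical

theorem saS_induced_subgraph {V : Type*} (κ μ' μ : Cardinal)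
    (h1 : κ < μ') (h2 : μ' ≤ μ) (Γ : BipGraph V) (hΓ : Γ.IsSaS κ μ) :
    ∃ Γ' : BipGraph V, Γ'.L = Γ.L ∧ Γ'.R ⊆ Γ.R ∧
      (∀ x ∈ Γ'.verts, ∀ y ∈ Γ'.verts, (Γ'.E x y ↔ Γ.E x y)) ∧
      Γ'.IsSaS κ μ' := by
  obtain ⟨hH, hNC, hNE, hLκ, hRμ, hκμ⟩ := hΓ
  -- witnesses for an edge and a non-edge
  obtain ⟨ℓ1, r1, hℓ1, hr1, hE1⟩ : ∃ ℓ r, ℓ ∈ Γ.L ∧ r ∈ Γ.R ∧ Γ.E ℓ r := by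
    have hNE' := hNE
    rw [BipGraph.IsEmptyG] at hNE'; push_neg at hNE'
    obtain ⟨x, y, hxy⟩ := hNE'
    rcases Γ.bip x y hxy with ⟨hx, hy⟩ | ⟨hx, hy⟩
    · exact ⟨x, y, hx, hy, hxy⟩
    · exact ⟨y, x, hy, hx, Γ.symm _ _ hxy⟩
  obtain ⟨ℓ2, hℓ2, r2, hr2, hE2⟩ : ∃ ℓ ∈ Γ.L, ∃ r ∈ Γ.R, ¬ Γ.E ℓ r := by
    have hNC' := hNC
    rw [BipGraph.IsComplete] at hNC'; push_neg at hNC'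
    exact hNC'
  -- L is infinite
  have hLinf : Γ.L.Infinite := by
    by_contra h
    exact finite_L_absurd hH hNE hNC (Set.not_infinite.mp h) (by rw [hLκ, hRμ]; exact hκμ)
  have hκinf : Cardinal.aleph0 ≤ κ := by
    rw [← hLκ]
    exact Cardinal.aleph0_le_mk_iff.mpr (Set.infinite_coe_iff.mpr hLinf)
  have hμ'inf : Cardinal.aleph0 ≤ μ' := hκinf.trans h1.le
  haveI : Nonempty V := ⟨ℓ1⟩
  -- base set R0
  have hμ'μ : μ' ≤ Cardinal.mk Γ.R := by rw [hRμ]; exact h2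
  obtain ⟨R0', hR0'sub, hR0'card⟩ := Cardinal.le_mk_iff_exists_subset.mp hμ'μ
  set R0 : Set V := insert r1 (insert r2 R0') with hR0def
  have hR0sub : R0 ⊆ Γ.R := by
    rw [hR0def]
    exact Set.insert_subset hr1 (Set.insert_subset hr2 hR0'sub)
  have hR0card : Cardinal.mk R0 ≤ μ' := by
    rw [hR0def]
    calc Cardinal.mk (insert r1 (insert r2 R0') : Set V)
        ≤ Cardinal.mk (insert r2 R0' : Set V) + 1 := Cardinal.mk_insert_le
      _ ≤ Cardinal.mk R0' + 1 + 1 := by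
          exact add_le_add_left Cardinal.mk_insert_le 1
      _ = μ' := by
          rw [hR0'card, Cardinal.add_one_eq hμ'inf, Cardinal.add_one_eq hμ'inf]
  -- extension chooser
  have hF : ∀ p : Set (V × V), ∃ g : V → V, Γ.IsAuto g ∧
      ((∃ g', Γ.IsAuto g' ∧ ∀ q ∈ p, g' q.1 = q.2) → ∀ q ∈ p, g q.1 = q.2) := by
    intro p
    by_cases h : ∃ g', Γ.IsAuto g' ∧ ∀ q ∈ p, g' q.1 = q.2
    · obtain ⟨g', hg1, hg2⟩ := h
      exact ⟨g', hg1, fun _ => hg2⟩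
    · exact ⟨id, id_auto, fun hc => absurd hc h⟩
  choose F hFauto hFspec using hF
  set Finv : Set (V × V) → V → V := fun p => Function.invFunOn (F p) Γ.verts with hFinvdef
  -- inverse facts
  have hinv_apply : ∀ p, ∀ y ∈ Γ.verts, F p (Finv p y) = y := by
    intro p y hy
    obtain ⟨x, hx, hgx⟩ := (hFauto p).1.2.2 hy
    exact Function.invFunOn_eq ⟨x, hx, hgx⟩
  have hinv_mem : ∀ p, ∀ y ∈ Γ.verts, Finv p y ∈ Γ.verts := by
    intro p y hy
    obtain ⟨x, hx, hgx⟩ := (hFauto p).1.2.2 hy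
    exact Function.invFunOn_mem ⟨x, hx, hgx⟩
  have hinv_R : ∀ p, ∀ y ∈ Γ.R, Finv p y ∈ Γ.R := by
    intro p y hy
    rcases hinv_mem p y (R_sub_verts hy) with hL | hR
    · exfalso
      have : F p (Finv p y) ∈ Γ.L := auto_mapsL (hFauto p) hL
      rw [hinv_apply p y (R_sub_verts hy)] at this
      exact Set.disjoint_left.mp Γ.disj this hy
    · exact hR
  -- automorphism pools
  set A : Set V → Set (V → V) := fun X =>
    {h | ∃ p : Set (V × V), p.Finite ∧ p ⊆ (Γ.L ∪ X) ×ˢ (Γ.L ∪ X) ∧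
      (h = F p ∨ h = Finv p)} with hAdef
  have hAmono : ∀ X Y : Set V, X ⊆ Y → A X ⊆ A Y := by
    intro X Y hXY g hg
    obtain ⟨p, hp1, hp2, hp3⟩ := hg
    exact ⟨p, hp1, hp2.trans (Set.prod_mono (Set.union_subset_union_right _ hXY)
      (Set.union_subset_union_right _ hXY)), hp3⟩
  have hAmapsR : ∀ X : Set V, ∀ g ∈ A X, Set.MapsTo g Γ.R Γ.R := by
    intro X g hg r hr
    obtain ⟨p, -, -, h | h⟩ := hg
    · rw [h]; exact auto_mapsR (hFauto p) hr
    · rw [h]; exact hinv_R p r hr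
  -- cardinality of pools
  have hAcard : ∀ X : Set V, Cardinal.mk X ≤ μ' → Cardinal.mk (A X) ≤ μ' := by
    intro X hX
    set T : Set V := Γ.L ∪ X with hTdef
    have hT : Cardinal.mk T ≤ μ' := by
      calc Cardinal.mk T ≤ Cardinal.mk Γ.L + Cardinal.mk X := Cardinal.mk_union_le _ _
        _ ≤ μ' + μ' := add_le_add (by rw [hLκ]; exact h1.le) hX
        _ = μ' := Cardinal.add_eq_self hμ'inf
    have hTinf : T.Infinite := hLinf.mono Set.subset_union_left
    haveI hTTinf : Infinite ↥(T ×ˢ T) :=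
      Set.infinite_coe_iff.mpr (hTinf.prod_left hTinf.nonempty)
    set P : Set (Set (V × V)) := {p | p.Finite ∧ p ⊆ T ×ˢ T} with hPdef
    have hPcard : Cardinal.mk P ≤ μ' := by
      set φ : ↥P → Finset ↥(T ×ˢ T) := fun p =>
        (Set.Finite.preimage Subtype.val_injective.injOn p.2.1).toFinset with hφdef
      have hφinj : Function.Injective φ := by
        intro p q h
        rw [hφdef] at h
        have hsets : (Subtype.val ⁻¹' (p : Set (V × V)) : Set ↥(T ×ˢ T)) =
            Subtype.val ⁻¹' (q : Set (V × V)) := Set.Finite.toFinset_inj.mp h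
        have hp : Subtype.val '' (Subtype.val ⁻¹' (p : Set (V × V)) : Set ↥(T ×ˢ T)) =
            (p : Set (V × V)) :=
          Set.image_preimage_eq_of_subset (by rw [Subtype.range_coe]; exact p.2.2)
        have hq : Subtype.val '' (Subtype.val ⁻¹' (q : Set (V × V)) : Set ↥(T ×ˢ T)) =
            (q : Set (V × V)) :=
          Set.image_preimage_eq_of_subset (by rw [Subtype.range_coe]; exact q.2.2)
        apply Subtype.ext
        rw [← hp, ← hq, hsets]
      calc Cardinal.mk P ≤ Cardinal.mk (Finset ↥(T ×ˢ T)) := Cardinal.mk_le_of_injective hφinj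
        _ = Cardinal.mk ↥(T ×ˢ T) := Cardinal.mk_finset_of_infinite _
        _ = Cardinal.mk T * Cardinal.mk T := Cardinal.mk_setProd T T
        _ ≤ μ' * μ' := mul_le_mul' hT hT
        _ = μ' := Cardinal.mul_eq_self hμ'inf
    have hAsub : A X ⊆ (F '' P) ∪ (Finv '' P) := by
      rintro g ⟨p, hp1, hp2, h | h⟩
      · exact Or.inl ⟨p, ⟨hp1, hp2⟩, h.symm⟩
      · exact Or.inr ⟨p, ⟨hp1, hp2⟩, h.symm⟩
    calc Cardinal.mk (A X) ≤ Cardinal.mk ((F '' P) ∪ (Finv '' P) : Set (V → V)) :=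
          Cardinal.mk_le_mk_of_subset hAsub
      _ ≤ Cardinal.mk (F '' P) + Cardinal.mk (Finv '' P) := Cardinal.mk_union_le _ _
      _ ≤ Cardinal.mk P + Cardinal.mk P := add_le_add Cardinal.mk_image_le Cardinal.mk_image_le
      _ ≤ μ' + μ' := add_le_add hPcard hPcard
      _ = μ' := Cardinal.add_eq_self hμ'inf
  -- the increasing chain
  set W : ℕ → Set V :=
    fun n => Nat.rec R0 (fun _ Wn => Wn ∪ ((⋃ g ∈ A Wn, g '' Wn) ∩ Γ.R)) n with hWdef
  have hWsucc : ∀ n, W (n + 1) = W n ∪ ((⋃ g ∈ A (W n), g '' W n) ∩ Γ.R) := fun n => rfl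
  have hWmono : Monotone W := monotone_nat_of_le_succ (fun n => by
    rw [hWsucc]; exact Set.subset_union_left)
  have hWR : ∀ n, W n ⊆ Γ.R := by
    intro n
    induction n with
    | zero => exact hR0sub
    | succ n ih =>
      rw [hWsucc]
      exact Set.union_subset ih Set.inter_subset_right
  set R' : Set V := ⋃ n, W n with hR'def
  have hR'sub : R' ⊆ Γ.R := Set.iUnion_subset hWR
  have hWsubR' : ∀ n, W n ⊆ R' := fun n => Set.subset_iUnion W n
  have happly : ∀ n, ∀ g ∈ A (W n), ∀ r ∈ R', g r ∈ R' := by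
    intro n g hg r hr
    obtain ⟨m, hm⟩ := Set.mem_iUnion.mp hr
    have hgN : g ∈ A (W (max n m)) := hAmono _ _ (hWmono (le_max_left n m)) hg
    have hrN : r ∈ W (max n m) := hWmono (le_max_right n m) hm
    have : g r ∈ W (max n m + 1) := by
      rw [hWsucc]
      exact Or.inr ⟨Set.mem_biUnion hgN ⟨r, hrN, rfl⟩, hAmapsR _ g hg (hWR _ hrN)⟩
    exact hWsubR' (max n m + 1) this
  -- cardinalities
  have hWcard : ∀ n, Cardinal.mk (W n) ≤ μ' := by
    intro n
    induction n with
    | zero => exact hR0card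
    | succ n ih =>
      rw [hWsucc]
      have hbU : Cardinal.mk (⋃ g ∈ A (W n), g '' W n) ≤ μ' := by
        have hsup : ⨆ g : ↥(A (W n)), Cardinal.mk ((g : V → V) '' W n) ≤ μ' := by
          rcases isEmpty_or_nonempty ↥(A (W n)) with h | h
          · rw [ciSup_of_empty]
            exact bot_le
          · exact ciSup_le' (fun g => Cardinal.mk_image_le.trans ih)
        calc Cardinal.mk (⋃ g ∈ A (W n), g '' W n)
            ≤ Cardinal.mk (A (W n)) * ⨆ g : ↥(A (W n)), Cardinal.mk ((g : V → V) '' W n) :=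
              Cardinal.mk_biUnion_le _ _
          _ ≤ μ' * μ' := mul_le_mul' (hAcard _ ih) hsup
          _ = μ' := Cardinal.mul_eq_self hμ'inf
      calc Cardinal.mk (W n ∪ ((⋃ g ∈ A (W n), g '' W n) ∩ Γ.R) : Set V)
          ≤ Cardinal.mk (W n) + Cardinal.mk ((⋃ g ∈ A (W n), g '' W n) ∩ Γ.R : Set V) :=
            Cardinal.mk_union_le _ _
        _ ≤ μ' + μ' := add_le_add ih
            ((Cardinal.mk_le_mk_of_subset Set.inter_subset_left).trans hbU)
        _ = μ' := Cardinal.add_eq_self hμ'inf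
  have hR'card : Cardinal.mk R' = μ' := by
    refine le_antisymm ?_ ?_
    · have hre : R' = ⋃ i : ULift ℕ, W i.down := by
        ext x
        simp only [hR'def, Set.mem_iUnion]
        exact ⟨fun ⟨n, h⟩ => ⟨⟨n⟩, h⟩, fun ⟨i, h⟩ => ⟨i.down, h⟩⟩
      rw [hre]
      calc Cardinal.mk (⋃ i : ULift ℕ, W i.down)
          ≤ Cardinal.mk (ULift ℕ) * ⨆ i : ULift ℕ, Cardinal.mk (W i.down) :=
            Cardinal.mk_iUnion_le _
        _ ≤ Cardinal.aleph0 * μ' := by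
            refine mul_le_mul' (le_of_eq (Cardinal.mk_eq_aleph0 _)) ?_
            exact ciSup_le' (fun i => hWcard i.down)
        _ ≤ μ' * μ' := mul_le_mul' hμ'inf le_rfl
        _ = μ' := Cardinal.mul_eq_self hμ'inf
    · rw [← hR0'card]
      refine Cardinal.mk_le_mk_of_subset ?_
      intro x hx
      exact hWsubR' 0 (Set.mem_insert_iff.mpr (Or.inr (Set.mem_insert_iff.mpr (Or.inr hx))))
  -- stages
  have hstage : ∀ t : Set V, t.Finite → t ⊆ Γ.L ∪ R' → ∃ n, t ⊆ Γ.L ∪ W n := by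
    intro t htfin
    refine Set.Finite.induction_on (motive := fun t _ => t ⊆ Γ.L ∪ R' → ∃ n, t ⊆ Γ.L ∪ W n)
      t htfin (fun _ => ⟨0, Set.empty_subset _⟩) ?_
    intro a s ha hsfin ih hsub
    obtain ⟨n, hn⟩ := ih ((Set.subset_insert _ _).trans hsub)
    rcases hsub (Set.mem_insert a s) with haL | haR'
    · exact ⟨n, Set.insert_subset (Or.inl haL) hn⟩
    · obtain ⟨m, hm⟩ := Set.mem_iUnion.mp haR'
      refine ⟨max n m, Set.insert_subset (Or.inr (hWmono (le_max_right n m) hm))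
        (hn.trans (Set.union_subset_union_right _ (hWmono (le_max_left n m))))⟩
  -- membership of witnesses
  have hr1R' : r1 ∈ R' := hWsubR' 0 (Set.mem_insert _ _)
  have hr2R' : r2 ∈ R' := hWsubR' 0 (Set.mem_insert_iff.mpr (Or.inr (Set.mem_insert _ _)))
  -- the induced graph
  set E' : V → V → Prop := fun x y => Γ.E x y ∧ x ∈ Γ.L ∪ R' ∧ y ∈ Γ.L ∪ R' with hE'def
  have hsymm' : ∀ x y, E' x y → E' y x := by
    rintro x y ⟨h, hx, hy⟩
    exact ⟨Γ.symm _ _ h, hy, hx⟩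
  have hbip' : ∀ x y, E' x y → (x ∈ Γ.L ∧ y ∈ R') ∨ (x ∈ R' ∧ y ∈ Γ.L) := by
    rintro x y ⟨h, hx, hy⟩
    rcases Γ.bip x y h with ⟨hxL, hyR⟩ | ⟨hxR, hyL⟩
    · refine Or.inl ⟨hxL, ?_⟩
      rcases hy with h' | h'
      · exact absurd h' (fun hh => Set.disjoint_left.mp Γ.disj hh hyR)
      · exact h'
    · refine Or.inr ⟨?_, hyL⟩
      rcases hx with h' | h'
      · exact absurd h' (fun hh => Set.disjoint_left.mp Γ.disj hh hxR)
      · exact h'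
  refine ⟨⟨Γ.L, R', Γ.Lne, ⟨r1, hr1R'⟩, Γ.disj.mono_right hR'sub, E', hsymm', hbip'⟩,
    rfl, hR'sub, ?_, ?_, ?_, ?_, ?_, ?_, h1⟩
  · -- induced edges
    intro x hx y hy
    exact ⟨fun h => h.1, fun h => ⟨h, hx, hy⟩⟩
  · -- homogeneity
    intro s f hsfin hpi
    obtain ⟨hs1, hs2, hs3, hs4, hs5⟩ := hpi
    replace hs1 : s ⊆ Γ.L ∪ R' := hs1
    have hfs : ∀ x ∈ s, f x ∈ Γ.L ∪ R' := by
      intro x hx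
      rcases hs1 hx with h | h
      · exact Or.inl (hs3 x hx h)
      · exact Or.inr (hs4 x hx h)
    have hsverts : s ⊆ Γ.verts := by
      intro x hx
      rcases hs1 hx with h | h
      · exact L_sub_verts h
      · exact R_sub_verts (hR'sub h)
    have hpiΓ : Γ.IsPartialIso Γ s f := by
      refine ⟨hsverts, hs2, hs3, ?_, ?_⟩
      · intro x hx hxR
        have hxR' : x ∈ R' := by
          rcases hs1 hx with h | h
          · exact absurd h (fun hh => Set.disjoint_left.mp Γ.disj hh hxR)
          · exact h
        exact hR'sub (hs4 x hx hxR')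
      · intro x hx y hy
        have e1 : Γ.E x y ↔ E' x y := ⟨fun h => ⟨h, hs1 hx, hs1 hy⟩, fun h => h.1⟩
        have e2 : Γ.E (f x) (f y) ↔ E' (f x) (f y) :=
          ⟨fun h => ⟨h, hfs x hx, hfs y hy⟩, fun h => h.1⟩
        rw [e1, e2]
        exact hs5 x hx y hy
    have htfin : (s ∪ f '' s).Finite := hsfin.union (hsfin.image f)
    have htsub : s ∪ f '' s ⊆ Γ.L ∪ R' := by
      refine Set.union_subset hs1 ?_
      rintro - ⟨x, hx, rfl⟩
      exact hfs x hx
    obtain ⟨n, hn⟩ := hstage _ htfin htsub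
    set p : Set (V × V) := (fun x => (x, f x)) '' s with hpdef
    have hpfin : p.Finite := hsfin.image _
    have hpsub : p ⊆ (Γ.L ∪ W n) ×ˢ (Γ.L ∪ W n) := by
      rintro - ⟨x, hx, rfl⟩
      exact ⟨hn (Or.inl hx), hn (Or.inr ⟨x, hx, rfl⟩)⟩
    have hFpA : F p ∈ A (W n) := ⟨p, hpfin, hpsub, Or.inl rfl⟩
    have hFinvA : Finv p ∈ A (W n) := ⟨p, hpfin, hpsub, Or.inr rfl⟩
    have hauto := hFauto p
    have hspec : ∀ q ∈ p, F p q.1 = q.2 := by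
      refine hFspec p ?_
      obtain ⟨g, hg, heq⟩ := hH s f hsfin hpiΓ
      refine ⟨g, hg, ?_⟩
      rintro - ⟨x, hx, rfl⟩
      exact (heq hx).symm
    have heqon : Set.EqOn f (F p) s := by
      intro x hx
      exact (hspec (x, f x) ⟨x, hx, rfl⟩).symm
    have hmapsL : Set.MapsTo (F p) Γ.L Γ.L := fun x hx => auto_mapsL hauto hx
    have hmapsR' : Set.MapsTo (F p) R' R' := fun r hr => happly n _ hFpA r hr
    have hsubverts : Γ.L ∪ R' ⊆ Γ.verts := by
      intro x hx
      rcases hx with h | h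
      · exact L_sub_verts h
      · exact R_sub_verts (hR'sub h)
    refine ⟨F p, ⟨⟨?_, ?_, ?_⟩, hmapsL, hmapsR', ?_⟩, heqon⟩
    · -- MapsTo on verts'
      intro x hx
      rcases hx with h | h
      · exact Or.inl (hmapsL h)
      · exact Or.inr (hmapsR' h)
    · -- InjOn
      exact (auto_injOn hauto).mono hsubverts
    · -- SurjOn
      intro y hy
      rcases hy with hyL | hyR'
      · obtain ⟨x, hxL, hgx⟩ := auto_L_surj hauto hyL
        exact ⟨x, Or.inl hxL, hgx⟩
      · refine ⟨Finv p y, Or.inr (happly n _ hFinvA y hyR'), ?_⟩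
        exact hinv_apply p y (R_sub_verts (hR'sub hyR'))
    · -- edge iff
      intro x hx y hy
      replace hx : x ∈ Γ.L ∪ R' := hx
      replace hy : y ∈ Γ.L ∪ R' := hy
      have hfx : F p x ∈ Γ.L ∪ R' := by
        rcases hx with h | h
        · exact Or.inl (hmapsL h)
        · exact Or.inr (hmapsR' h)
      have hfy : F p y ∈ Γ.L ∪ R' := by
        rcases hy with h | h
        · exact Or.inl (hmapsL h)
        · exact Or.inr (hmapsR' h)
      have e1 : E' x y ↔ Γ.E x y := ⟨fun h => h.1, fun h => ⟨h, hx, hy⟩⟩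
      have e2 : E' (F p x) (F p y) ↔ Γ.E (F p x) (F p y) :=
        ⟨fun h => h.1, fun h => ⟨h, hfx, hfy⟩⟩
      show E' x y ↔ E' (F p x) (F p y)
      rw [e1, e2]
      exact auto_iff hauto (hsubverts hx) (hsubverts hy)
  · -- not complete
    intro hc
    exact hE2 (hc ℓ2 hℓ2 r2 hr2R').1
  · -- not empty
    intro he
    exact he ℓ1 r1 ⟨hE1, Or.inl hℓ1, Or.inr hr1R'⟩
  · exact hLκ
  · exact hR'card

end Main
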